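/- Let G be a connected simple graph on the finite vertex set V with |V| = n, let L be its Laplacian matrix, and let S be a nonempty proper subset of V such that the subgraph of G induced on S is connected. Then every complex eigenvalue μ of the diagonal block C_S of L associated with S (the principal submatrix of L with rows and columns indexed by S, mapped entrywise into ℂ) satisfies Re μ > 0. -/

import Mathlib

open Matrix Finset
open scoped ComplexOrder

private lemma sum_subtype_of_zero_off {V : Type*} [Fintype V] (S : Set V)
    [DecidablePred (· ∈ S)] (g : V → ℝ) (hg : ∀ v ∉ S, g v = 0) :
    ∑ v : S, g v = ∑ v, g v := by
  rw [← Finset.sum_subtype (Finset.univ.filter (· ∈ S)) (by simp) g]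
  exact Finset.sum_filter_of_ne (fun v _ hv => by_contra fun hvS => hv (hg v hvS))

private lemma block_posDef {V : Type*} [Fintype V] [DecidableEq V]
    (G : SimpleGraph V) [DecidableRel G.Adj] (hG : G.Connected)
    (S : Set V) [DecidablePred (· ∈ S)] (hSproper : S ≠ Set.univ) :
    ((G.lapMatrix ℝ).submatrix (Subtype.val : S → V) (Subtype.val : S → V)).PosDef := by
  set C := (G.lapMatrix ℝ).submatrix (Subtype.val : S → V) (Subtype.val : S → V) with hC
  have hsymm : (G.lapMatrix ℝ).IsSymm := G.isSymm_lapMatrix (R := ℝ)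
  refine Matrix.posDef_iff_dotProduct_mulVec.mpr ⟨?_, ?_⟩
  · refine Matrix.IsHermitian.ext fun i j => ?_
    simpa [hC, Matrix.submatrix_apply] using (congrFun (congrFun hsymm j.1) i.1).symm
  · intro x hx
    set y : V → ℝ := fun v => if h : v ∈ S then x ⟨v, h⟩ else 0 with hy
    have hyzero : ∀ v ∉ S, y v = 0 := fun v hv => by simp [hy, hv]
    have hform : x ⬝ᵥ (C *ᵥ x) = y ⬝ᵥ ((G.lapMatrix ℝ) *ᵥ y) := by
      have h1 : ∀ i : S, ((G.lapMatrix ℝ) *ᵥ y) i.1 = (C *ᵥ x) i := by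
        intro i
        simp only [Matrix.mulVec, dotProduct]
        rw [← sum_subtype_of_zero_off S (fun j => G.lapMatrix ℝ i.1 j * y j)
          (fun v hv => by simp [hyzero v hv])]
        refine Finset.sum_congr rfl fun j _ => ?_
        simp [hy, j.2, hC]
      calc x ⬝ᵥ (C *ᵥ x) = ∑ i : S, y i.1 * ((G.lapMatrix ℝ) *ᵥ y) i.1 := by
            refine Finset.sum_congr rfl fun i _ => ?_
            rw [h1 i]; simp [hy, i.2]
        _ = y ⬝ᵥ ((G.lapMatrix ℝ) *ᵥ y) := by
            rw [dotProduct]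
            exact sum_subtype_of_zero_off S (fun v => y v * ((G.lapMatrix ℝ) *ᵥ y) v)
              (fun v hv => by rw [hyzero v hv, zero_mul])
    have hnonneg : 0 ≤ y ⬝ᵥ ((G.lapMatrix ℝ) *ᵥ y) := by
      simpa using (SimpleGraph.posSemidef_lapMatrix ℝ G).dotProduct_mulVec_nonneg y
    rcases lt_or_eq_of_le hnonneg with h | h
    · rw [star_trivial, hform]; exact h
    · exfalso
      have hzero : Matrix.toLinearMap₂' ℝ (G.lapMatrix ℝ) y y = 0 := by
        rw [Matrix.toLinearMap₂'_apply']; exact h.symm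
      rw [SimpleGraph.lapMatrix_toLinearMap₂'_apply'_eq_zero_iff_forall_reachable] at hzero
      obtain ⟨w, hw⟩ : ∃ w : V, w ∉ S := by
        by_contra hc
        push_neg at hc
        exact hSproper (Set.eq_univ_iff_forall.mpr hc)
      apply hx
      funext i
      have := hzero i.1 w (hG.preconnected i.1 w)
      rw [hyzero w hw] at this
      have : y i.1 = 0 := this
      simpa [hy, i.2] using this

theorem lapMatrix_block_eigenvalues_pos_re {V : Type*} [Fintype V] [DecidableEq V]
    (G : SimpleGraph V) [DecidableRel G.Adj] (hG : G.Connected)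
    (S : Set V) [DecidablePred (· ∈ S)]
    (hS : S.Nonempty) (hSproper : S ≠ Set.univ)
    (hconn : (G.induce S).Connected) :
    ∀ μ : ℂ, μ ∈ spectrum ℂ
      (((G.lapMatrix ℝ).submatrix (Subtype.val : S → V) (Subtype.val : S → V)).map
        (algebraMap ℝ ℂ)) → 0 < μ.re := by
  intro μ hμ
  set C := (G.lapMatrix ℝ).submatrix (Subtype.val : S → V) (Subtype.val : S → V) with hCdef
  have hC : C.PosDef := block_posDef G hG S hSproper
  set M := C.map (algebraMap ℝ ℂ) with hMdef
  -- extract an eigenvector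
  rw [← AlgEquiv.spectrum_eq (Matrix.toLinAlgEquiv' (R := ℂ) (n := S)) M,
    ← Module.End.hasEigenvalue_iff_mem_spectrum] at hμ
  obtain ⟨v, hv⟩ := hμ.exists_hasEigenvector
  have hv0 : v ≠ 0 := hv.right
  have hMv : M *ᵥ v = μ • v := by
    have := hv.apply_eq_smul
    rwa [Matrix.toLinAlgEquiv'_apply] at this
  -- the quadratic form value
  set c : ℂ := star v ⬝ᵥ (M *ᵥ v) with hc
  set t : ℂ := star v ⬝ᵥ v with ht
  have hct : c = μ * t := by
    rw [hc, hMv, dotProduct_smul, smul_eq_mul, ht]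
  have htpos : 0 < t := Matrix.dotProduct_star_self_pos_iff.mpr hv0
  have htre : 0 < t.re := (Complex.lt_def.mp htpos).1
  have htim : t.im = 0 := ((Complex.lt_def.mp htpos).2).symm
  -- real and imaginary parts of v
  set a : S → ℝ := fun i => (v i).re with ha
  set b : S → ℝ := fun i => (v i).im with hb
  have hcre : c.re = a ⬝ᵥ (C *ᵥ a) + b ⬝ᵥ (C *ᵥ b) := by
    rw [hc]
    simp only [dotProduct, Matrix.mulVec, Pi.star_apply, Finset.mul_sum]
    rw [Complex.re_sum, ← Finset.sum_add_distrib]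
    refine Finset.sum_congr rfl fun i _ => ?_
    rw [Complex.re_sum, ← Finset.sum_add_distrib]
    refine Finset.sum_congr rfl fun j _ => ?_
    simp only [hMdef, Matrix.map_apply, Complex.mul_re, Complex.mul_im, Complex.star_def,
      Complex.conj_re, Complex.conj_im, Complex.coe_algebraMap, Complex.ofReal_re,
      Complex.ofReal_im, ha, hb]
    ring
  have hcpos : 0 < c.re := by
    rw [hcre]
    have hab : a ≠ 0 ∨ b ≠ 0 := by
      by_contra hcon
      push_neg at hcon
      apply hv0
      funext i
      have h1 := congrFun hcon.1 i
      have h2 := congrFun hcon.2 i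
      exact Complex.ext (by simpa [ha] using h1) (by simpa [hb] using h2)
    have hpsd := hC.posSemidef
    rcases hab with h | h
    · have h1 : 0 < a ⬝ᵥ (C *ᵥ a) := by simpa using hC.dotProduct_mulVec_pos h
      have h2 : 0 ≤ b ⬝ᵥ (C *ᵥ b) := by simpa using hpsd.dotProduct_mulVec_nonneg b
      linarith
    · have h1 : 0 ≤ a ⬝ᵥ (C *ᵥ a) := by simpa using hpsd.dotProduct_mulVec_nonneg a
      have h2 : 0 < b ⬝ᵥ (C *ᵥ b) := by simpa using hC.dotProduct_mulVec_pos h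
      linarith
  have : c.re = μ.re * t.re := by
    rw [hct, Complex.mul_re, htim, mul_zero, sub_zero]
  rw [this] at hcpos
  rcases mul_pos_iff.mp hcpos with ⟨h, _⟩ | ⟨_, h⟩
  · exact h
  · linarith
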